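/- arXiv:1501.02602 — 2 statements merged into one kernel-verified Lean document; each statement's English description precedes it below -/
import Mathlib

section
/- Every infinite virtually cyclic group that contains no non-trivial finite normal subgroup is isomorphic to the infinite cyclic group ℤ or to the infinite dihedral group D∞. -/
/-- A group is virtually cyclic if it contains a cyclic subgroup of finite index. -/
def VirtuallyCyclic (G : Type*) [Group G] : Prop :=
  ∃ H : Subgroup G, IsCyclic ↥H ∧ H.FiniteIndex

/-- An infinite virtually cyclic group is of type I if it admits a surjective
homomorphism onto the infinite cyclic group ℤ. -/
def IsTypeI (G : Type*) [Group G] : Prop :=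
  ∃ f : G →* Multiplicative ℤ, Function.Surjective f

/-- An infinite virtually cyclic group is of type II if it admits a surjective
homomorphism onto the infinite dihedral group D∞. -/
def IsTypeII (G : Type*) [Group G] : Prop :=
  ∃ f : G →* DihedralGroup 0, Function.Surjective f


/-- An infinite cyclic group is isomorphic to `Multiplicative ℤ`. -/
lemma aux_infinite_cyclic_equiv (G : Type*) [Group G] [IsCyclic G] [Infinite G] :
    Nonempty (G ≃* Multiplicative ℤ) := by
  obtain ⟨g, hg⟩ := IsCyclic.exists_generator (α := G)
  have hfin : ¬ IsOfFinOrder g := by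
    intro hf
    have hz : (Subgroup.zpowers g : Set G).Finite := hf.finite_zpowers
    have htop : (Subgroup.zpowers g : Set G) = Set.univ := by
      ext x; simpa using hg x
    rw [htop] at hz
    exact Set.infinite_univ hz
  have hinj : Function.Injective (zpowersHom G g) := by
    intro a b hab
    have := (injective_zpow_iff_not_isOfFinOrder.mpr hfin) hab
    exact this
  have hsurj : Function.Surjective (zpowersHom G g) := by
    intro x
    obtain ⟨n, hn⟩ := hg x
    exact ⟨Multiplicative.ofAdd n, hn⟩
  exact ⟨(MulEquiv.ofBijective (zpowersHom G g) ⟨hinj, hsurj⟩).symm⟩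

/-- Infinite cyclic groups are torsion-free. -/
lemma aux_torsionfree (G : Type*) [Group G] [IsCyclic G] [Infinite G]
    {x : G} {n : ℕ} (hn : n ≠ 0) (hx : x ^ n = 1) : x = 1 := by
  obtain ⟨e⟩ := aux_infinite_cyclic_equiv G
  have : (e x) ^ n = 1 := by rw [← map_pow, hx, map_one]
  have h2 : n • (e x).toAdd = 0 := this
  have : (e x).toAdd = 0 := by
    rcases smul_eq_zero.mp h2 with h | h
    · exact absurd h hn
    · exact h
  have : e x = 1 := this
  have := congrArg e.symm this
  simpa using this

/-- A finite index subgroup of an infinite group is infinite. -/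
lemma aux_infinite_subgroup {G : Type*} [Group G] [Infinite G] (H : Subgroup G)
    [H.FiniteIndex] : Infinite H := by
  by_contra hfin
  rw [not_infinite_iff_finite] at hfin
  have hq : Finite (G ⧸ H) := inferInstance
  have hG : Finite G := Finite.of_equiv ((G ⧸ H) × ↥H) Subgroup.groupEquivQuotientProdSubgroup.symm
  exact not_finite G

/-- Any automorphism of an infinite cyclic group is the identity or inversion. -/
lemma aux_mulAut_dichotomy {G : Type*} [Group G] [IsCyclic G] [Infinite G]
    (σ : MulAut G) : (∀ x, σ x = x) ∨ (∀ x, σ x = x⁻¹) := by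
  obtain ⟨g, hg⟩ := IsCyclic.exists_generator (α := G)
  have hfin : ¬ IsOfFinOrder g := by
    intro hf
    have hz : (Subgroup.zpowers g : Set G).Finite := hf.finite_zpowers
    have htop : (Subgroup.zpowers g : Set G) = Set.univ := by
      ext x; simpa using hg x
    rw [htop] at hz
    exact Set.infinite_univ hz
  have hinj : Function.Injective fun n : ℤ => g ^ n :=
    injective_zpow_iff_not_isOfFinOrder.mpr hfin
  obtain ⟨k, hk⟩ := Subgroup.mem_zpowers_iff.mp (hg (σ g))
  obtain ⟨l, hl⟩ := Subgroup.mem_zpowers_iff.mp (hg (σ.symm g))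
  have hgk : g ^ (k * l) = g ^ (1 : ℤ) := by
    rw [zpow_one, zpow_mul, hk]
    calc (σ g) ^ l = σ (g ^ l) := (map_zpow σ.toMonoidHom g l).symm
      _ = σ (σ.symm g) := by rw [hl]
      _ = g := σ.apply_symm_apply g
  have hkl : k * l = 1 := hinj hgk
  have hx : ∀ x : G, σ x = x ^ k := by
    intro x
    obtain ⟨n, hn⟩ := Subgroup.mem_zpowers_iff.mp (hg x)
    rw [← hn, map_zpow, ← hk, ← zpow_mul, ← zpow_mul, mul_comm]
  rcases Int.eq_one_or_neg_one_of_mul_eq_one hkl with h1 | h1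
  · left; intro x; rw [hx x, h1, zpow_one]
  · right; intro x; rw [hx x, h1, zpow_neg_one]

/-- The automorphism group of an infinite cyclic group has at most 2 elements. -/
lemma aux_mulAut_card (G : Type*) [Group G] [IsCyclic G] [Infinite G] :
    Finite (MulAut G) ∧ Nat.card (MulAut G) ≤ 2 := by
  classical
  set ι : MulAut G → Bool := fun σ => decide (∀ x, σ x = x) with hι
  have hinj : Function.Injective ι := by
    intro σ τ hst
    by_cases hσ : ∀ x, σ x = x
    · have hτ : ∀ x, τ x = x := by
        have : ι τ = true := by rw [← hst, hι]; simpa using hσ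
        simpa [hι] using this
      ext x; rw [hσ, hτ]
    · have hτ : ¬ ∀ x, τ x = x := by
        intro hc
        have : ι σ = true := by rw [hst, hι]; simpa using hc
        simp only [hι, decide_eq_true_eq] at this
        exact hσ this
      have h1 := (aux_mulAut_dichotomy σ).resolve_left hσ
      have h2 := (aux_mulAut_dichotomy τ).resolve_left hτ
      ext x; rw [h1, h2]
  refine ⟨Finite.of_injective ι hinj, ?_⟩
  calc Nat.card (MulAut G) ≤ Nat.card Bool := Nat.card_le_card_of_injective ι hinj
    _ = 2 := by simp [Nat.card_eq_fintype_card]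

/-- Key step: a homomorphism out of a normal subgroup `C` whose kernel consists of
`n₀`-torsion elements is injective, under the no-finite-normal-subgroup hypothesis. -/
lemma aux_ker_bot {V : Type*} [Group V]
    (h : ∀ K : Subgroup V, K.Normal → Finite K → K = ⊥)
    (C : Subgroup V) (hCn : C.Normal)
    (N : Subgroup V) (hNC : N ≤ C) [IsCyclic ↥N] [Infinite ↥N]
    [hfN : (N.subgroupOf C).FiniteIndex]
    {M : Type*} [Group M] (φ : ↥C →* M) (n₀ : ℕ) (hn₀ : n₀ ≠ 0)
    (hker : ∀ x : ↥C, φ x = 1 ↔ x ^ n₀ = 1) :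
    Function.Injective φ := by
  set K : Subgroup V := (φ.ker).map C.subtype with hK
  have hmemK : ∀ y : V, y ∈ K ↔ ∃ hy : y ∈ C, (⟨y, hy⟩ : ↥C) ^ n₀ = 1 := by
    intro y
    constructor
    · rintro ⟨x, hx, rfl⟩
      exact ⟨x.2, by simpa using (hker x).mp hx⟩
    · rintro ⟨hy, hpow⟩
      exact ⟨⟨y, hy⟩, (hker _).mpr hpow, rfl⟩
  have hKnormal : K.Normal := by
    constructor
    intro k hk v
    rw [hmemK] at hk ⊢
    obtain ⟨hkC, hpow⟩ := hk
    have hvC : v * k * v⁻¹ ∈ C := hCn.conj_mem k hkC v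
    refine ⟨hvC, ?_⟩
    have h1 : ((⟨k, hkC⟩ : ↥C) ^ n₀ : ↥C) = 1 := hpow
    have h2 : (k : V) ^ n₀ = 1 := by
      have := congrArg (Subgroup.subtype C) h1
      simpa using this
    ext
    push_cast
    rw [conj_pow, h2, mul_one, mul_inv_cancel]
  have hKfin : Finite K := by
    have hinj : Function.Injective
        (fun x : φ.ker => (QuotientGroup.mk (x : ↥C) : ↥C ⧸ N.subgroupOf C)) := by
      intro a b hab
      have hab' : ((a : ↥C))⁻¹ * (b : ↥C) ∈ N.subgroupOf C := QuotientGroup.eq.mp hab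
      set z : ↥C := (a : ↥C)⁻¹ * (b : ↥C) with hz
      have hzker : z ∈ φ.ker := φ.ker.mul_mem (φ.ker.inv_mem a.2) b.2
      have hzpow : z ^ n₀ = 1 := (hker z).mp hzker
      have hzN : (z : V) ∈ N := hab'
      have : (⟨(z : V), hzN⟩ : ↥N) ^ n₀ = 1 := by
        ext; push_cast
        have := congrArg (Subgroup.subtype C) hzpow
        simpa using this
      have hz1 : (⟨(z : V), hzN⟩ : ↥N) = 1 := aux_torsionfree ↥N hn₀ this
      have : z = 1 := by
        ext
        simpa using congrArg (Subgroup.subtype N) hz1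
      have : (a : ↥C) = (b : ↥C) := by
        rw [← mul_one (a : ↥C), ← this, hz]
        group
      exact Subtype.ext this
    have hq : Finite (↥C ⧸ N.subgroupOf C) := inferInstance
    have hkf : Finite φ.ker := Finite.of_injective _ hinj
    exact Finite.of_equiv ↥φ.ker (Subgroup.equivMapOfInjective φ.ker C.subtype C.subtype_injective).toEquiv
  have hKbot : K = ⊥ := h K hKnormal hKfin
  have : φ.ker = ⊥ := by
    rw [hK] at hKbot
    exact (Subgroup.map_eq_bot_iff_of_injective φ.ker (f := C.subtype) C.subtype_injective).mp hKbot
  exact φ.ker_eq_bot_iff.mp this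

lemma aux_structure (V : Type*) [Group V] [Infinite V]
    (hV : ∃ H : Subgroup V, IsCyclic ↥H ∧ H.FiniteIndex)
    (h : ∀ K : Subgroup V, K.Normal → Finite K → K = ⊥) :
    ∃ C : Subgroup V, C.Normal ∧ C.FiniteIndex ∧ C.index ≤ 2 ∧ IsCyclic ↥C ∧ Infinite ↥C ∧
      (∀ v : V, v ∉ C → ∀ x : V, x ∈ C → v * x * v⁻¹ = x⁻¹) := by
  obtain ⟨H, hHcyc, hHfi⟩ := hV
  haveI := hHfi
  haveI := hHcyc
  set N : Subgroup V := H.normalCore with hNdef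
  haveI hNn : N.Normal := H.normalCore_normal
  haveI : N.FiniteIndex := Subgroup.finiteIndex_normalCore H
  haveI hNcyc : IsCyclic ↥N := Subgroup.isCyclic_of_le H.normalCore_le
  haveI hNinf : Infinite ↥N := aux_infinite_subgroup N
  haveI hAutFin : Finite (MulAut ↥N) := (aux_mulAut_card ↥N).1
  set ρ : V →* MulAut ↥N := MulAut.conjNormal with hρ
  set C : Subgroup V := ρ.ker with hC
  haveI hCn : C.Normal := MonoidHom.normal_ker ρ
  haveI hCfi : C.FiniteIndex := Subgroup.finiteIndex_ker ρ
  have hCidx : C.index ≤ 2 := by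
    rw [hC, Subgroup.index_ker]
    calc Nat.card ρ.range ≤ Nat.card (MulAut ↥N) :=
          Nat.card_le_card_of_injective _ Subtype.coe_injective
      _ ≤ 2 := (aux_mulAut_card ↥N).2
  have hNC : N ≤ C := by
    intro n hn
    rw [hC, MonoidHom.mem_ker]
    refine MulEquiv.ext fun m => ?_
    have hcomm : (⟨n, hn⟩ : ↥N) * m = m * ⟨n, hn⟩ := by
      letI := IsCyclic.commGroup (α := ↥N)
      exact mul_comm _ _
    have hcomm' : n * (m : V) = (m : V) * n := congrArg Subtype.val hcomm
    ext
    rw [MulAut.conjNormal_apply]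
    show n * (m : V) * n⁻¹ = (m : V)
    rw [hcomm', mul_assoc, mul_inv_cancel, mul_one]
  have hcent : ∀ c ∈ C, ∀ m ∈ N, c * m * c⁻¹ = m := by
    intro c hc m hm
    rw [hC, MonoidHom.mem_ker] at hc
    have := congrArg Subtype.val (MulEquiv.ext_iff.mp hc ⟨m, hm⟩)
    rw [MulAut.conjNormal_apply] at this
    exact this
  have hle : N.subgroupOf C ≤ Subgroup.center ↥C := by
    intro x hx
    rw [Subgroup.mem_center_iff]
    intro y
    have hxN : (x : V) ∈ N := hx
    have h1 : (y : V) * x * (y : V)⁻¹ = x := hcent y y.2 x hxN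
    have h2 : (y : V) * x = (x : V) * y := by
      have h3 := congrArg (· * (y : V)) h1
      simpa [mul_assoc] using h3
    ext
    push_cast
    exact h2
  haveI : (N.subgroupOf C).FiniteIndex := Subgroup.instFiniteIndex_subgroupOf N C
  haveI : (Subgroup.center ↥C).FiniteIndex := Subgroup.finiteIndex_of_le hle
  set n₀ : ℕ := (Subgroup.center ↥C).index with hn₀def
  have hn₀ : n₀ ≠ 0 := Subgroup.FiniteIndex.index_ne_zero
  set φ : ↥C →* ↥(Subgroup.center ↥C) := MonoidHom.transferCenterPow ↥C with hφ
  have hker : ∀ x : ↥C, φ x = 1 ↔ x ^ n₀ = 1 := by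
    intro x
    rw [Subtype.ext_iff]
    simp [hφ, MonoidHom.transferCenterPow_apply]
    exact Iff.rfl
  have hφinj : Function.Injective φ := aux_ker_bot h C hCn N hNC φ n₀ hn₀ hker
  have hcomm : ∀ a b : ↥C, a * b = b * a := by
    intro a b
    apply hφinj
    rw [map_mul, map_mul]
    exact Subtype.ext (Subgroup.mem_center_iff.mp (φ b).2 (φ a))
  have hCcyc : IsCyclic ↥C := by
    letI : CommGroup ↥C := { (inferInstance : Group ↥C) with mul_comm := hcomm }
    set m₀ : ℕ := (N.subgroupOf C).index with hm₀def
    have hm₀ : m₀ ≠ 0 := Subgroup.FiniteIndex.index_ne_zero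
    have hmem : ∀ x : ↥C, x ^ m₀ ∈ N.subgroupOf C := fun x =>
      Subgroup.pow_index_mem (N.subgroupOf C) x
    set ψ : ↥C →* ↥(N.subgroupOf C) :=
      (powMonoidHom m₀).codRestrict (N.subgroupOf C) hmem with hψ
    have hker2 : ∀ x : ↥C, ψ x = 1 ↔ x ^ m₀ = 1 := by
      intro x
      rw [Subtype.ext_iff]
      exact Iff.rfl
    have hψinj : Function.Injective ψ := aux_ker_bot h C hCn N hNC ψ m₀ hm₀ hker2
    haveI : IsCyclic ↥(N.subgroupOf C) :=
      isCyclic_of_surjective (Subgroup.subgroupOfEquivOfLe hNC).symm.toMonoidHom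
        (Subgroup.subgroupOfEquivOfLe hNC).symm.surjective
    haveI : IsCyclic ↥ψ.range := Subgroup.isCyclic ψ.range
    exact isCyclic_of_surjective (MonoidHom.ofInjective hψinj).symm.toMonoidHom
      (MonoidHom.ofInjective hψinj).symm.surjective
  haveI hCinf : Infinite ↥C := aux_infinite_subgroup C
  have hconj : ∀ v : V, v ∉ C → ∀ x : V, x ∈ C → v * x * v⁻¹ = x⁻¹ := by
    intro v hv x hx
    set σ : MulAut ↥C := MulAut.conjNormal v with hσ
    rcases aux_mulAut_dichotomy σ with hid | hinv
    · exfalso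
      apply hv
      rw [hC, MonoidHom.mem_ker]
      refine MulEquiv.ext fun m => ?_
      have hmC : (m : V) ∈ C := hNC m.2
      have := congrArg Subtype.val (hid ⟨(m : V), hmC⟩)
      rw [hσ] at this
      rw [MulAut.conjNormal_apply] at this
      ext
      rw [MulAut.conjNormal_apply]
      exact this
    · have := congrArg Subtype.val (hinv ⟨x, hx⟩)
      rw [hσ, MulAut.conjNormal_apply] at this
      simpa using this
  exact ⟨C, hCn, hCfi, hCidx, hCcyc, hCinf, hconj⟩

lemma aux_final (V : Type*) [Group V] [Infinite V]
    (hV : ∃ H : Subgroup V, IsCyclic ↥H ∧ H.FiniteIndex)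
    (h : ∀ K : Subgroup V, K.Normal → Finite K → K = ⊥) :
    Nonempty (V ≃* Multiplicative ℤ) ∨ Nonempty (V ≃* DihedralGroup 0) := by
  classical
  obtain ⟨C, hCn, hCfi, hCidx, hCcyc, hCinf, hconj⟩ := aux_structure V hV h
  have hidxpos : C.index ≠ 0 := hCfi.index_ne_zero
  interval_cases hidx : C.index
  · exact absurd rfl hidxpos
  · -- index 1 : C = ⊤, V is infinite cyclic
    have hCtop : C = ⊤ := Subgroup.index_eq_one.mp hidx
    subst hCtop
    haveI : IsCyclic V := isCyclic_of_surjective (Subgroup.topEquiv (G := V)).toMonoidHom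
      (Subgroup.topEquiv (G := V)).surjective
    exact Or.inl (aux_infinite_cyclic_equiv V)
  · -- index 2 : V ≃* D∞
    right
    have hCne : C ≠ ⊤ := by
      intro hC; rw [hC, Subgroup.index_top] at hidx; omega
    obtain ⟨v, hv⟩ : ∃ v : V, v ∉ C := by
      by_contra hc
      push_neg at hc
      exact hCne ((Subgroup.eq_top_iff' C).mpr hc)
    have hmul : ∀ a b : V, a * b ∈ C ↔ (a ∈ C ↔ b ∈ C) := fun a b =>
      Subgroup.mul_mem_iff_of_index_two hidx
    have hsq : ∀ w : V, w ∉ C → w * w = 1 := by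
      intro w hw
      have hwwC : w * w ∈ C := (hmul w w).mpr (Iff.rfl)
      have h1 : w * (w * w) * w⁻¹ = (w * w)⁻¹ := hconj w hw _ hwwC
      have h2 : w * w = (w * w)⁻¹ := by
        calc w * w = w * (w * w) * w⁻¹ := by group
          _ = (w * w)⁻¹ := h1
      have h3 : (⟨w * w, hwwC⟩ : ↥C) ^ 2 = 1 := by
        ext
        push_cast
        rw [pow_two]
        calc (w * w) * (w * w) = (w * w) * (w * w)⁻¹ := by rw [← h2]
          _ = 1 := mul_inv_cancel _
      have := aux_torsionfree ↥C (by norm_num : (2:ℕ) ≠ 0) h3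
      simpa using congrArg Subtype.val this
    obtain ⟨e⟩ := aux_infinite_cyclic_equiv ↥C
    set E : ∀ x : V, x ∈ C → ℤ := fun x hx => (e ⟨x, hx⟩).toAdd with hE
    have hE_mul : ∀ x y (hx : x ∈ C) (hy : y ∈ C) (hxy : x * y ∈ C),
        E (x * y) hxy = E x hx + E y hy := by
      intro x y hx hy hxy
      have : (⟨x * y, hxy⟩ : ↥C) = ⟨x, hx⟩ * ⟨y, hy⟩ := rfl
      rw [hE]
      dsimp only
      rw [this, map_mul]
      rfl
    have hE_inj : ∀ x y (hx : x ∈ C) (hy : y ∈ C), E x hx = E y hy → x = y := by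
      intro x y hx hy hxy
      rw [hE] at hxy
      have h1 : e ⟨x, hx⟩ = e ⟨y, hy⟩ := Multiplicative.toAdd.injective hxy
      have := e.injective h1
      exact congrArg Subtype.val this
    have hE_congr : ∀ x y (hx : x ∈ C) (hy : y ∈ C), x = y → E x hx = E y hy := by
      intro x y hx hy hxy
      subst hxy
      rfl
    have hE_one : E 1 (one_mem C) = 0 := by
      rw [hE]
      dsimp only
      have h1 : (⟨(1:V), one_mem C⟩ : ↥C) = 1 := rfl
      rw [h1, map_one]
      rfl
    have hE_inv : ∀ x (hx : x ∈ C) (hx' : x⁻¹ ∈ C), E x⁻¹ hx' = - E x hx := by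
      intro x hx hx'
      have h0 : E (x⁻¹ * x) (mul_mem hx' hx) = E x⁻¹ hx' + E x hx := hE_mul _ _ _ _ _
      have h1 : E (x⁻¹ * x) (mul_mem hx' hx) = 0 := by
        rw [hE_congr _ 1 _ (one_mem C) (inv_mul_cancel x)]
        exact hE_one
      omega
    have hvmem : ∀ x : V, x ∉ C → v * x ∈ C := by
      intro x hx
      rw [hmul]
      exact iff_of_false hv hx
    set f : V → DihedralGroup 0 := fun x =>
      if hx : x ∈ C then DihedralGroup.r (Int.cast (E x hx) : ZMod 0)
      else DihedralGroup.sr (Int.cast (E (v * x) (hvmem x hx)) : ZMod 0) with hf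
    have hmulf : ∀ x y : V, f (x * y) = f x * f y := by
      intro x y
      by_cases hx : x ∈ C <;> by_cases hy : y ∈ C
      · have hxy : x * y ∈ C := mul_mem hx hy
        rw [hf]
        dsimp only
        rw [dif_pos hxy, dif_pos hx, dif_pos hy, DihedralGroup.r_mul_r]
        congr 1
        exact_mod_cast hE_mul x y hx hy hxy
      · have hxy : x * y ∉ C := by
          rw [hmul]; simp [hx, hy]
        rw [hf]
        dsimp only
        rw [dif_neg hxy, dif_pos hx, dif_neg hy, DihedralGroup.r_mul_sr]
        congr 1
        have hstep : v * (x * y) = x⁻¹ * (v * y) := by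
          have hc : v * x * v⁻¹ = x⁻¹ := hconj v hv x hx
          calc v * (x * y) = (v * x * v⁻¹) * (v * y) := by group
            _ = x⁻¹ * (v * y) := by rw [hc]
        have hinvx : x⁻¹ ∈ C := inv_mem hx
        have h1 : E (v * (x * y)) (hvmem _ hxy)
            = E x⁻¹ hinvx + E (v * y) (hvmem y hy) := by
          rw [hE_congr _ _ _ (mul_mem hinvx (hvmem y hy)) hstep]
          exact hE_mul _ _ _ _ _
        have h2 : E x⁻¹ hinvx = - E x hx := hE_inv x hx hinvx
        rw [h1, h2]
        push_cast
        ring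
      · have hxy : x * y ∉ C := by
          rw [hmul]; simp [hx, hy]
        rw [hf]
        dsimp only
        rw [dif_neg hxy, dif_neg hx, dif_pos hy, DihedralGroup.sr_mul_r]
        congr 1
        have h1 : E (v * (x * y)) (hvmem _ hxy)
            = E (v * x) (hvmem x hx) + E y hy := by
          rw [hE_congr _ _ _ (mul_mem (hvmem x hx) hy) (by group)]
          exact hE_mul _ _ _ _ _
        rw [h1]
        exact Int.cast_add _ _
      · have hxy : x * y ∈ C := by
          rw [hmul]; simp [hx, hy]
        rw [hf]
        dsimp only
        rw [dif_pos hxy, dif_neg hx, dif_neg hy, DihedralGroup.sr_mul_sr]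
        congr 1
        have hxx : x⁻¹ = x := inv_eq_of_mul_eq_one_right (hsq x hx)
        have hstep : x * y = (v * x)⁻¹ * (v * y) := by
          rw [mul_inv_rev]
          calc x * y = x⁻¹ * (v⁻¹ * v) * y := by rw [hxx]; group
            _ = x⁻¹ * v⁻¹ * (v * y) := by group
        have hinvvx : (v * x)⁻¹ ∈ C := inv_mem (hvmem x hx)
        have h1 : E (x * y) hxy = E (v * x)⁻¹ hinvvx + E (v * y) (hvmem y hy) := by
          rw [hE_congr _ _ _ (mul_mem hinvvx (hvmem y hy)) hstep]
          exact hE_mul _ _ _ _ _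
        have h2 : E (v * x)⁻¹ hinvvx = - E (v * x) (hvmem x hx) :=
          hE_inv _ (hvmem x hx) hinvvx
        rw [h1, h2]
        push_cast
        ring
    have hinj : Function.Injective f := by
      intro a b hab
      rw [hf] at hab
      dsimp only at hab
      by_cases ha : a ∈ C <;> by_cases hb : b ∈ C
      · rw [dif_pos ha, dif_pos hb] at hab
        injection hab with h'
        exact hE_inj _ _ _ _ (by exact_mod_cast h')
      · rw [dif_pos ha, dif_neg hb] at hab
        exact absurd hab (by simp)
      · rw [dif_neg ha, dif_pos hb] at hab
        exact absurd hab (by simp)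
      · rw [dif_neg ha, dif_neg hb] at hab
        injection hab with h'
        have := hE_inj _ _ _ _ (by exact_mod_cast h')
        exact mul_left_cancel this
    have hsurj : Function.Surjective f := by
      rintro (i | i)
      · refine ⟨((e.symm (Multiplicative.ofAdd i)) : V), ?_⟩
        rw [hf]
        dsimp only
        rw [dif_pos (e.symm (Multiplicative.ofAdd i)).2]
        congr 1
        rw [hE]
        dsimp only
        rw [Subtype.coe_eta, e.apply_symm_apply]
        rfl
      · set c := e.symm (Multiplicative.ofAdd i) with hc
        have hx : v * (c : V) ∉ C := by
          intro hcc
          rw [hmul] at hcc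
          exact hv (hcc.mpr c.2)
        refine ⟨v * (c : V), ?_⟩
        rw [hf]
        dsimp only
        rw [dif_neg hx]
        congr 1
        have hveq : v * (v * (c : V)) = (c : V) := by
          rw [← mul_assoc, hsq v hv, one_mul]
        rw [hE_congr _ _ _ c.2 hveq]
        rw [hE]
        dsimp only
        rw [Subtype.coe_eta, hc, e.apply_symm_apply]
        rfl
    exact ⟨MulEquiv.ofBijective (MonoidHom.mk' f hmulf) ⟨hinj, hsurj⟩⟩

/-- Every infinite virtually cyclic group with no non-trivial finite normal subgroup is
isomorphic to the infinite cyclic group ℤ or to the infinite dihedral group D∞. -/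
theorem infinite_cyclic_or_dihedral_of_no_finite_normal (V : Type*) [Group V] [Infinite V]
    (hV : VirtuallyCyclic V)
    (h : ∀ K : Subgroup V, K.Normal → Finite K → K = ⊥) :
    Nonempty (V ≃* Multiplicative ℤ) ∨ Nonempty (V ≃* DihedralGroup 0) := by
  obtain ⟨H, h1, h2⟩ := hV
  exact aux_final V ⟨H, h1, h2⟩ h
end

section
/- Let V be an infinite virtually cyclic group and let f : V → Q be any surjective group homomorphism onto the infinite cyclic group ℤ or onto the infinite dihedral group D∞. Then the kernel of f equals K_V, the unique maximal normal finite subgroup of V. -/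
private lemma infinite_of_finiteIndex {G : Type*} [Group G] [Infinite G] (H : Subgroup G)
    (h : H.FiniteIndex) : Infinite H := by
  by_contra hfin
  rw [not_infinite_iff_finite] at hfin
  haveI := h
  haveI : Finite (G ⧸ H) := H.finite_quotient_of_finiteIndex
  haveI : Finite G :=
    Finite.of_equiv ((G ⧸ H) × H) Subgroup.groupEquivQuotientProdSubgroup.symm
  exact not_finite G

private lemma isOfFinOrder_of_mem_finite {G : Type*} [Group G] {S : Subgroup G}
    (h : Finite S) {x : G} (hx : x ∈ S) : IsOfFinOrder x :=
  Submonoid.isOfFinOrder_coe.mpr (isOfFinOrder_of_finite (⟨x, hx⟩ : S))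

private lemma ker_finite {V Q : Type*} [Group V] [Infinite V] [Group Q] [Infinite Q]
    (hV : VirtuallyCyclic V) (f : V →* Q) (hf : Function.Surjective f) :
    Finite f.ker := by
  obtain ⟨H, hcyc, hfi⟩ := hV
  haveI := hfi
  haveI hHinf : Infinite H := infinite_of_finiteIndex H hfi
  obtain ⟨g, hg⟩ := hcyc.exists_generator
  have hHz : H = Subgroup.zpowers (g : V) := by
    apply le_antisymm
    · intro x hx
      obtain ⟨m, hm⟩ := hg ⟨x, hx⟩
      exact ⟨m, congrArg Subtype.val hm⟩
    · exact Subgroup.zpowers_le.mpr g.2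
  have hfo : ¬ IsOfFinOrder (f (g : V)) := by
    intro hford
    have hmapz : (H.map f : Set Q) ⊆ (Subgroup.zpowers (f (g : V)) : Set Q) := by
      rintro y ⟨x, hxH, rfl⟩
      obtain ⟨m, hm⟩ := hg ⟨x, hxH⟩
      have hm' : (g : V) ^ m = x := congrArg Subtype.val hm
      exact ⟨m, by show f (g:V) ^ m = f x; rw [← map_zpow, hm']⟩
    have hsfin : ((Subgroup.zpowers (f (g : V)) : Subgroup Q) : Set Q).Finite :=
      finite_zpowers.mpr hford
    have hfin : Finite (H.map f) := (hsfin.subset hmapz).to_subtype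
    have hFI : (H.map f).FiniteIndex := by
      constructor
      intro h0
      exact hfi.index_ne_zero (Nat.eq_zero_of_zero_dvd (h0 ▸ H.index_map_dvd hf))
    haveI := infinite_of_finiteIndex (H.map f) hFI
    exact not_finite (H.map f)
  have hbot : f.ker ⊓ H = ⊥ := by
    rw [eq_bot_iff]
    rintro x ⟨hx1, hx2⟩
    obtain ⟨m, hm⟩ := hg ⟨x, hx2⟩
    have hm' : (g : V) ^ m = x := congrArg Subtype.val hm
    rcases eq_or_ne m 0 with h0 | h0
    · subst h0
      simp only [zpow_zero] at hm'
      simp [← hm', Subgroup.mem_bot]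
    · exfalso
      apply hfo
      refine isOfFinOrder_iff_zpow_eq_one.mpr ⟨m, h0, ?_⟩
      rw [← map_zpow, hm']
      exact hx1
  haveI : Finite (V ⧸ H) := H.finite_quotient_of_finiteIndex
  refine Finite.of_injective (fun k : f.ker => (QuotientGroup.mk k.1 : V ⧸ H)) ?_
  intro a b hab
  have h1 : (a : V)⁻¹ * b ∈ H := QuotientGroup.eq.mp hab
  have h2 : (a : V)⁻¹ * b ∈ f.ker := mul_mem (inv_mem a.2) b.2
  have h3 : (a : V)⁻¹ * b ∈ (⊥ : Subgroup V) := hbot ▸ (⟨h2, h1⟩ : (a:V)⁻¹*b ∈ f.ker ⊓ H)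
  have h4 : (a : V)⁻¹ * b = 1 := h3
  ext
  exact inv_mul_eq_one.mp h4

private lemma r_pow_zmod0 (i : ZMod 0) (k : ℕ) :
    (DihedralGroup.r i : DihedralGroup 0) ^ k = DihedralGroup.r ((k : ZMod 0) * i) := by
  induction k with
  | zero => simp [DihedralGroup.one_def, -DihedralGroup.r_zero]
  | succ n ih =>
    rw [pow_succ, ih, DihedralGroup.r_mul_r]
    congr 1
    push_cast
    ring

private lemma not_isOfFinOrder_r {i : ZMod 0} (hi : i ≠ 0) :
    ¬ IsOfFinOrder (DihedralGroup.r i : DihedralGroup 0) := by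
  intro h
  obtain ⟨n, hn, hpow⟩ := isOfFinOrder_iff_pow_eq_one.mp h
  rw [r_pow_zmod0, DihedralGroup.one_def] at hpow
  have hni : (n : ZMod 0) * i = 0 := by injection hpow
  haveI : NoZeroDivisors (ZMod 0) := inferInstanceAs (NoZeroDivisors ℤ)
  haveI : CharZero (ZMod 0) := ZMod.charZero
  rcases mul_eq_zero.mp hni with h' | h'
  · exact hn.ne' (by exact_mod_cast h')
  · exact hi h'

private lemma dihedral_normal_finite_eq_bot (N : Subgroup (DihedralGroup 0))
    (hN : N.Normal) (hfin : Finite N) : N = ⊥ := by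
  haveI : CharZero (ZMod 0) := ZMod.charZero
  rw [eq_bot_iff]
  intro x hx
  rcases x with i | i
  · rcases eq_or_ne i 0 with h0 | h0
    · rw [h0, ← DihedralGroup.one_def]
      exact Subgroup.mem_bot.mpr rfl
    · exact absurd (isOfFinOrder_of_mem_finite hfin hx) (not_isOfFinOrder_r h0)
  · exfalso
    have hinv : (DihedralGroup.r (1 : ZMod 0))⁻¹ = DihedralGroup.r (-1) := by
      apply inv_eq_of_mul_eq_one_right
      rw [DihedralGroup.r_mul_r, add_neg_cancel, DihedralGroup.one_def]
    have hconj : DihedralGroup.r 1 * DihedralGroup.sr i * (DihedralGroup.r (1:ZMod 0))⁻¹ ∈ N :=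
      hN.conj_mem _ hx _
    rw [hinv, DihedralGroup.r_mul_sr, DihedralGroup.sr_mul_r] at hconj
    have hr2 : (DihedralGroup.r (-2) : DihedralGroup 0) ∈ N := by
      have := mul_mem hx hconj
      rw [DihedralGroup.sr_mul_sr] at this
      convert this using 2
      ring
    have h2 : (-2 : ZMod 0) ≠ 0 := by simp
    exact absurd (isOfFinOrder_of_mem_finite hfin hr2) (not_isOfFinOrder_r h2)

private lemma mult_int_eq_one_of_finOrder {x : Multiplicative ℤ} (h : IsOfFinOrder x) :
    x = 1 := by
  obtain ⟨n, hn, hpow⟩ := isOfFinOrder_iff_pow_eq_one.mp h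
  have h0 : n • x.toAdd = 0 := by
    simpa using congrArg Multiplicative.toAdd hpow
  rw [nsmul_eq_mul] at h0
  rcases mul_eq_zero.mp h0 with h' | h'
  · exact absurd h' (by exact_mod_cast hn.ne')
  · exact toAdd_eq_zero.mp h'

/-- For an infinite virtually cyclic group `V`, the kernel of any surjective homomorphism
onto ℤ or onto the infinite dihedral group D∞ equals the unique maximal normal finite
subgroup `K` of `V`. -/
theorem ker_eq_maximal_finite_normal (V : Type*) [Group V] [Infinite V]
    (hV : VirtuallyCyclic V) (K : Subgroup V) (hN : K.Normal) (hF : Finite K)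
    (hmax : ∀ L : Subgroup V, L.Normal → Finite L → L ≤ K) :
    (∀ f : V →* Multiplicative ℤ, Function.Surjective f → f.ker = K) ∧
    (∀ f : V →* DihedralGroup 0, Function.Surjective f → f.ker = K) := by
  have hmapfin : ∀ {Q : Type} [Group Q] (f : V →* Q), Finite (K.map f) := by
    intro Q _ f
    have : ((K : Set V).image f).Finite := (Set.toFinite (K : Set V)).image f
    exact this.to_subtype
  constructor
  · intro f hf
    apply le_antisymm
    · exact hmax f.ker (f.normal_ker) (ker_finite hV f hf)
    · intro x hx
      have hmem : f x ∈ K.map f := ⟨x, hx, rfl⟩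
      exact mult_int_eq_one_of_finOrder (isOfFinOrder_of_mem_finite (hmapfin f) hmem)
  · intro f hf
    apply le_antisymm
    · exact hmax f.ker (f.normal_ker) (ker_finite hV f hf)
    · intro x hx
      have hmem : f x ∈ K.map f := ⟨x, hx, rfl⟩
      have heq : K.map f = ⊥ :=
        dihedral_normal_finite_eq_bot _ (Subgroup.Normal.map hN f hf) (hmapfin f)
      rw [heq] at hmem
      exact hmem
end
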